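/- arXiv:1506.04171 — 4 statements merged into one kernel-verified Lean document; each statement's English description precedes it below -/
import Mathlib

section
/- For every natural number n there exists a totally separable packing of n unit circles in the plane with exactly ⌊2(n − √n)⌋ tangencies. -/
open EuclideanSpace Metric Finset
open scoped Classical

noncomputable section

/-- The tangent hyperplane to a pair of touching unit spheres centered at `x` and `y`:
the hyperplane through the midpoint `(x+y)/2` perpendicular to `x - y`. -/
def tangentHyp {d : ℕ} (x y : EuclideanSpace ℝ (Fin d)) : Set (EuclideanSpace ℝ (Fin d)) :=
  {p | (inner ℝ (p - midpoint ℝ x y) (x - y) : ℝ) = 0}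

/-- A set of centers forms a packing of unit spheres: pairwise distances are at least 2. -/
def IsPacking {d : ℕ} (S : Set (EuclideanSpace ℝ (Fin d))) : Prop :=
  S.Pairwise fun x y => 2 ≤ dist x y

/-- A packing is totally separable if every tangent hyperplane of a touching pair avoids the
open unit ball about every center. -/
def TotallySeparable {d : ℕ} (S : Set (EuclideanSpace ℝ (Fin d))) : Prop :=
  ∀ x ∈ S, ∀ y ∈ S, dist x y = 2 → ∀ z ∈ S, tangentHyp x y ∩ ball z 1 = ∅

/-- The number of tangencies (unordered pairs of centers at distance exactly 2)
of a finite packing. -/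
def tangencies {d : ℕ} (S : Finset (EuclideanSpace ℝ (Fin d))) : ℕ :=
  (S.offDiag.filter fun p => dist p.1 p.2 = 2).card / 2


def pt (a b : ℝ) : EuclideanSpace ℝ (Fin 2) := (WithLp.equiv 2 (Fin 2 → ℝ)).symm ![a, b]

@[simp] lemma pt_apply0 (a b : ℝ) : pt a b 0 = a := rfl
@[simp] lemma pt_apply1 (a b : ℝ) : pt a b 1 = b := rfl

lemma dist_pt (a b c d : ℝ) : dist (pt a b) (pt c d) = Real.sqrt ((a-c)^2 + (b-d)^2) := by
  rw [EuclideanSpace.dist_eq, Fin.sum_univ_two]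
  simp [Real.dist_eq, sq_abs]

lemma dist_pt_eq_two_iff (a b c d : ℝ) :
    dist (pt a b) (pt c d) = 2 ↔ (a-c)^2 + (b-d)^2 = 4 := by
  rw [dist_pt]
  constructor
  · intro h
    have := congrArg (· ^ 2) h
    simp [Real.sq_sqrt (by positivity : (0:ℝ) ≤ (a-c)^2 + (b-d)^2)] at this; linarith
  · intro h; rw [h]; rw [show (4:ℝ) = 2^2 by norm_num, Real.sqrt_sq (by norm_num)]

lemma coord_le_dist (p z : EuclideanSpace ℝ (Fin 2)) (i : Fin 2) : |p i - z i| ≤ dist p z := by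
  rw [EuclideanSpace.dist_eq, Fin.sum_univ_two]
  rw [← Real.sqrt_sq_eq_abs]
  apply Real.sqrt_le_sqrt
  fin_cases i <;> simp [Real.dist_eq, sq_abs] <;> positivity

lemma int_sq_add_sq_eq_one (u v : ℤ) :
    u^2 + v^2 = 1 ↔ (u = 0 ∧ (v = 1 ∨ v = -1)) ∨ (v = 0 ∧ (u = 1 ∨ u = -1)) := by
  constructor
  · intro h
    have hu : -1 ≤ u ∧ u ≤ 1 := ⟨by nlinarith [sq_nonneg v], by nlinarith [sq_nonneg v]⟩
    have hv : -1 ≤ v ∧ v ≤ 1 := ⟨by nlinarith [sq_nonneg u], by nlinarith [sq_nonneg u]⟩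
    obtain ⟨hu1, hu2⟩ := hu; obtain ⟨hv1, hv2⟩ := hv
    interval_cases u <;> interval_cases v <;> simp_all <;> omega
  · rintro (⟨rfl, rfl | rfl⟩ | ⟨rfl, rfl | rfl⟩) <;> ring

def Q (w k l : ℕ) : Prop := (l = k + 1 ∧ (k+1) % w ≠ 0) ∨ l = k + w

instance (w k l : ℕ) : Decidable (Q w k l) := by unfold Q; infer_instance

lemma vert_iff {w k l : ℕ} (hw : 0 < w) : (l % w = k % w ∧ l / w = k / w + 1) ↔ l = k + w := by
  constructor
  · rintro ⟨h1, h2⟩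
    calc l = w * (l/w) + l%w := (Nat.div_add_mod l w).symm
    _ = (w * (k/w) + k%w) + w := by rw [h1, h2]; ring
    _ = k + w := by rw [Nat.div_add_mod]
  · rintro rfl
    exact ⟨Nat.add_mod_right k w, Nat.add_div_right k hw⟩

lemma horiz_iff {w k l : ℕ} (hw : 0 < w) :
    (l % w = k % w + 1 ∧ l / w = k / w) ↔ (l = k + 1 ∧ (k+1) % w ≠ 0) := by
  have hdecomp : (k % w + 1) + w * (k / w) = k + 1 := by
    conv_rhs => rw [← Nat.div_add_mod k w]
    ring
  constructor
  · rintro ⟨h1, h2⟩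
    have hl : l = k + 1 := by
      calc l = w * (l/w) + l%w := (Nat.div_add_mod l w).symm
      _ = (w * (k/w) + k%w) + 1 := by rw [h1, h2]; ring
      _ = k + 1 := by rw [Nat.div_add_mod]
    subst hl
    refine ⟨rfl, ?_⟩
    rw [h1]; exact Nat.succ_ne_zero _
  · rintro ⟨rfl, h⟩
    have hlt : k % w + 1 < w := by
      rcases Nat.lt_or_ge (k % w + 1) w with h' | h'
      · exact h'
      have hew : k % w + 1 = w := by have := Nat.mod_lt k hw; omega
      exfalso; apply h
      rw [show k + 1 = w * (k/w + 1) by rw [← hdecomp, hew]; ring]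
      exact Nat.mul_mod_right _ _
    have hres := (Nat.div_mod_unique hw (a := k+1) (b := w) (d := k / w) (c := k % w + 1)).2
      ⟨hdecomp, hlt⟩
    exact ⟨hres.2, hres.1⟩

def gp (w k : ℕ) : EuclideanSpace ℝ (Fin 2) := pt (2*((k % w : ℕ) : ℝ)) (2*((k / w : ℕ) : ℝ))

lemma gp_inj {w : ℕ} (hw : 0 < w) : Function.Injective (gp w) := by
  intro k l h
  have h0 := congrArg (· 0) h
  have h1 := congrArg (· 1) h
  simp only [gp, pt_apply0, pt_apply1] at h0 h1
  have e0 : k % w = l % w := Nat.cast_inj (R := ℝ) |>.mp (by linarith)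
  have e1 : k / w = l / w := Nat.cast_inj (R := ℝ) |>.mp (by linarith)
  rw [← Nat.div_add_mod k w, ← Nat.div_add_mod l w, e0, e1]

lemma dist_pt_nat (A B C D : ℕ) :
    dist (pt (2*(A:ℝ)) (2*(B:ℝ))) (pt (2*(C:ℝ)) (2*(D:ℝ))) = 2 ↔
      ((A:ℤ) - C)^2 + ((B:ℤ) - D)^2 = 1 := by
  rw [dist_pt_eq_two_iff]
  constructor
  · intro h
    have h' : ((((A:ℤ) - C : ℤ)):ℝ)^2 + ((((B:ℤ) - D : ℤ)):ℝ)^2 = 1 := by push_cast; nlinarith [h]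
    exact_mod_cast h'
  · intro h
    have h' := congrArg (fun z : ℤ => (z : ℝ)) h
    push_cast at h'
    nlinarith [h']

lemma dist_gp {w : ℕ} (hw : 0 < w) (k l : ℕ) :
    dist (gp w k) (gp w l) = 2 ↔ Q w k l ∨ Q w l k := by
  rw [gp, gp, dist_pt_nat, int_sq_add_sq_eq_one]
  simp only [Q]
  constructor
  · rintro (⟨hu, hv | hv⟩ | ⟨hv, hu | hu⟩)
    · -- k/w = l/w + 1, same mod: k = l + w
      refine Or.inr (Or.inr ?_)
      rw [← vert_iff hw (k := l) (l := k)]; omega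
    · refine Or.inl (Or.inr ?_)
      rw [← vert_iff hw (k := k) (l := l)]; omega
    · refine Or.inr (Or.inl ?_)
      rw [← horiz_iff hw (k := l) (l := k)]; omega
    · refine Or.inl (Or.inl ?_)
      rw [← horiz_iff hw (k := k) (l := l)]; omega
  · rintro ((h | h) | (h | h))
    · have := (horiz_iff hw (k := k) (l := l)).2 h; omega
    · have := (vert_iff hw (k := k) (l := l)).2 h; omega
    · have := (horiz_iff hw (k := l) (l := k)).2 h; omega
    · have := (vert_iff hw (k := l) (l := k)).2 h; omega

lemma card_dvd_succ_filter {w m : ℕ} (hw : 0 < w) :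
    ((range m).filter fun k => (k+1) % w = 0).card = m / w := by
  rw [← Nat.Ioc_filter_dvd_card_eq_div m w]
  refine Finset.card_bij' (fun k _ => k + 1) (fun k _ => k - 1) ?hi ?hj ?left ?right
  case hi =>
    intro a ha
    simp only [mem_filter, mem_range] at ha
    simp only [mem_filter, mem_Ioc]
    exact ⟨⟨Nat.succ_pos a, ha.1⟩, Nat.dvd_iff_mod_eq_zero.2 ha.2⟩
  case hj =>
    intro a ha
    simp only [mem_filter, mem_Ioc] at ha
    simp only [mem_filter, mem_range]
    have h1 : a - 1 + 1 = a := by omega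
    rw [h1]
    exact ⟨by omega, Nat.dvd_iff_mod_eq_zero.1 ha.2⟩
  case left => intro a ha; change a + 1 - 1 = a; omega
  case right =>
    intro a ha
    simp only [mem_filter, mem_Ioc] at ha
    change a - 1 + 1 = a
    omega

lemma count_pairs {w n : ℕ} (hw : 0 < w) (hwn : w ≤ n) :
    (((range n ×ˢ range n).filter fun p => Q w p.1 p.2 ∨ Q w p.2 p.1)).card
      = 2 * (((n - 1) - (n-1)/w) + (n - w)) := by
  classical
  have Qlt : ∀ a b, Q w a b → a < b := by rintro a b (⟨rfl, -⟩ | rfl) <;> omega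
  rw [filter_or, card_union_of_disjoint]
  · have hswap : ((range n ×ˢ range n).filter fun p => Q w p.2 p.1).card
        = ((range n ×ˢ range n).filter fun p => Q w p.1 p.2).card := by
      refine Finset.card_bij' (fun p _ => p.swap) (fun p _ => p.swap) ?hi ?hj ?left ?right
      case hi =>
        intro p hp
        simp only [mem_filter, mem_product, Prod.fst_swap, Prod.snd_swap] at hp ⊢
        exact ⟨⟨hp.1.2, hp.1.1⟩, hp.2⟩
      case hj =>
        intro p hp
        simp only [mem_filter, mem_product, Prod.fst_swap, Prod.snd_swap] at hp ⊢
        exact ⟨⟨hp.1.2, hp.1.1⟩, hp.2⟩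
      case left => intro p hp; exact Prod.swap_swap p
      case right => intro p hp; exact Prod.swap_swap p
    rw [hswap]
    have hQ : ((range n ×ˢ range n).filter fun p => Q w p.1 p.2).card
        = ((n - 1) - (n-1)/w) + (n - w) := by
      simp only [Q, filter_or]
      rw [card_union_of_disjoint]
      · congr 1
        · have heq : ((range n ×ˢ range n).filter fun p => p.2 = p.1 + 1 ∧ (p.1+1) % w ≠ 0).card
              = ((range (n-1)).filter fun k => ¬ ((k+1) % w = 0)).card := by
            refine Finset.card_bij' (fun p _ => p.1) (fun k _ => (k, k+1)) ?hi ?hj ?left ?right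
            case hi =>
              intro p hp
              simp only [mem_filter, mem_product, mem_range] at hp ⊢
              exact ⟨by omega, hp.2.2⟩
            case hj =>
              intro k hk
              simp only [mem_filter, mem_range] at hk
              simp only [mem_filter, mem_product, mem_range]
              exact ⟨⟨by omega, by omega⟩, trivial, hk.2⟩
            case left =>
              intro p hp
              simp only [mem_filter, mem_product, mem_range] at hp
              rw [Prod.ext_iff]
              exact ⟨rfl, hp.2.1.symm⟩
            case right => intro k hk; rfl
          rw [heq, filter_not, card_sdiff_of_subset (filter_subset _ _), card_range,
            card_dvd_succ_filter hw]
        · rw [← card_range (n - w)]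
          refine Finset.card_bij' (fun p _ => p.1) (fun k _ => (k, k+w)) ?hi ?hj ?left ?right
          case hi =>
            intro p hp
            simp only [mem_filter, mem_product, mem_range] at hp ⊢
            omega
          case hj =>
            intro k hk
            simp only [mem_range] at hk
            simp only [mem_filter, mem_product, mem_range]
            exact ⟨⟨by omega, by omega⟩, trivial⟩
          case left =>
            intro p hp
            simp only [mem_filter, mem_product, mem_range] at hp
            rw [Prod.ext_iff]
            exact ⟨rfl, hp.2.symm⟩
          case right => intro k hk; rfl
      · rw [Finset.disjoint_left]
        rintro ⟨a, b⟩ h1 h2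
        simp only [mem_filter, mem_product, mem_range] at h1 h2
        obtain ⟨-, rfl, hmod⟩ := h1
        have hw1 : w = 1 := by omega
        subst hw1
        omega
    rw [hQ]; ring
  · rw [Finset.disjoint_left]
    rintro ⟨a, b⟩ h1 h2
    simp only [mem_filter, mem_product] at h1 h2
    have := Qlt _ _ h1.2; have := Qlt _ _ h2.2; omega

lemma int_key (n s w q r : ℤ) (hw : w = s+1) (h1 : s^2 ≤ n-1) (h2 : n-1 < w^2)
    (h3 : w*q + r = n-1) (h4 : 0 ≤ r) (h5 : r < w) (h6 : 0 ≤ q) :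
    (w+q)^2 < 4*n ∧ 4*n ≤ (w+q+1)^2 := by
  have hqw : q < w := by nlinarith
  constructor
  · rcases lt_or_ge q (w-1) with hc | hc
    · nlinarith [mul_le_mul_of_nonneg_left (by omega : q + 1 ≤ w - 1) (by omega : (0:ℤ) ≤ w)]
    · have : q = w - 1 := by omega
      subst this
      nlinarith
  · nlinarith [sq_nonneg (w - q - 1)]

lemma key_ineq (n : ℕ) (hn : 1 ≤ n) :
    ((Nat.sqrt (n-1) + 1) + (n-1)/(Nat.sqrt (n-1) + 1))^2 < 4*n ∧
    4*n ≤ ((Nat.sqrt (n-1) + 1) + (n-1)/(Nat.sqrt (n-1) + 1) + 1)^2 := by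
  set s := Nat.sqrt (n-1) with hs
  set w := s + 1 with hwdef
  set q := (n-1)/w with hqdef
  have hw : 0 < w := Nat.succ_pos _
  have h1 : s^2 ≤ n-1 := Nat.sqrt_le' _
  have h2 : n - 1 < w^2 := Nat.lt_succ_sqrt' _
  have h3 : w * q + (n-1) % w = n - 1 := Nat.div_add_mod _ _
  have h4 : (n-1) % w < w := Nat.mod_lt _ hw
  have e1 : ((n:ℤ) - 1) = ((n-1:ℕ):ℤ) := by omega
  have H1 : ((s:ℤ))^2 ≤ (n:ℤ) - 1 := by rw [e1]; exact_mod_cast h1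
  have H2 : (n:ℤ) - 1 < (w:ℤ)^2 := by rw [e1]; exact_mod_cast h2
  have H3 : (w:ℤ)*(q:ℤ) + (((n-1)%w : ℕ):ℤ) = (n:ℤ)-1 := by rw [e1]; exact_mod_cast h3
  have key := int_key n s w q (((n-1)%w : ℕ):ℤ) (by omega)
    H1 H2 H3 (Int.natCast_nonneg _) (by exact_mod_cast h4) (Int.natCast_nonneg _)
  constructor
  · exact_mod_cast key.1
  · exact_mod_cast key.2

lemma floor_formula (n w q : ℕ) (h1 : (w+q)^2 < 4*n) (h2 : 4*n ≤ (w+q+1)^2) :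
    ⌊2 * ((n:ℝ) - Real.sqrt n)⌋ = 2*(n:ℤ) - (w+q+1) := by
  have hm : (0:ℝ) ≤ ((w:ℝ)+q+1)/2 := by positivity
  have hub : Real.sqrt n ≤ ((w:ℝ)+q+1)/2 := by
    rw [show ((w:ℝ)+q+1)/2 = Real.sqrt ((((w:ℝ)+q+1)/2)^2) by rw [Real.sqrt_sq hm]]
    apply Real.sqrt_le_sqrt
    have : (4*n : ℝ) ≤ ((w:ℝ)+q+1)^2 := by exact_mod_cast h2
    nlinarith
  have hlb : ((w:ℝ)+q)/2 < Real.sqrt n := by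
    rw [show ((w:ℝ)+q)/2 = Real.sqrt ((((w:ℝ)+q)/2)^2) by rw [Real.sqrt_sq (by positivity)]]
    apply Real.sqrt_lt_sqrt (by positivity)
    have : ((w:ℝ)+q)^2 < 4*n := by exact_mod_cast h1
    nlinarith
  rw [Int.floor_eq_iff]
  constructor
  · push_cast
    nlinarith [hub]
  · push_cast
    nlinarith [hlb]

lemma dist_pt_ge (A B C D : ℕ) (h : ¬(A = C ∧ B = D)) :
    2 ≤ dist (pt (2*(A:ℝ)) (2*(B:ℝ))) (pt (2*(C:ℝ)) (2*(D:ℝ))) := by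
  rw [dist_pt]
  have key : 1 ≤ ((A:ℤ)-C)^2 + ((B:ℤ)-D)^2 := by
    rcases eq_or_ne A C with rfl | hne
    · have hBD : B ≠ D := fun hb => h ⟨rfl, hb⟩
      have h0 : ((B:ℤ)-D) ≠ 0 := by omega
      nlinarith [Int.one_le_abs h0, sq_abs ((B:ℤ)-D), sq_nonneg ((A:ℤ)-A), abs_nonneg ((B:ℤ)-D)]
    · have h0 : ((A:ℤ)-C) ≠ 0 := by omega
      nlinarith [Int.one_le_abs h0, sq_abs ((A:ℤ)-C), sq_nonneg ((B:ℤ)-D), abs_nonneg ((A:ℤ)-C)]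
  have keyR : (1:ℝ) ≤ ((A:ℝ)-C)^2 + ((B:ℝ)-D)^2 := by
    have h' : ((1:ℤ):ℝ) ≤ ((((A:ℤ)-C)^2 + ((B:ℤ)-D)^2 : ℤ) : ℝ) := by exact_mod_cast key
    push_cast at h'
    linarith
  have hge : (4:ℝ) ≤ (2*(A:ℝ)-2*(C:ℝ))^2 + (2*(B:ℝ)-2*(D:ℝ))^2 := by nlinarith [keyR]
  calc (2:ℝ) = Real.sqrt 4 := by
        rw [show (4:ℝ) = 2^2 by norm_num, Real.sqrt_sq (by norm_num : (0:ℝ) ≤ 2)]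
    _ ≤ _ := Real.sqrt_le_sqrt hge

lemma odd_far (d v : ℕ) : (1:ℝ) ≤ |(2*(d:ℝ)+1) - 2*(v:ℝ)| := by
  have hcast : ((2*(d:ℤ)+1 - 2*(v:ℤ) : ℤ) : ℝ) = (2*(d:ℝ)+1) - 2*(v:ℝ) := by push_cast; ring
  rw [← hcast, ← Int.cast_abs]
  have h0 : (2*(d:ℤ)+1 - 2*(v:ℤ)) ≠ 0 := by omega
  exact_mod_cast Int.one_le_abs h0

lemma tangent_vert (a b d : ℕ) (p : EuclideanSpace ℝ (Fin 2))
    (hp : p ∈ tangentHyp (pt (2*(a:ℝ)) (2*(b:ℝ))) (pt (2*(a:ℝ)) (2*(d:ℝ)))) (hbd : b = d + 1) :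
    p 1 = 2*(d:ℝ) + 1 := by
  subst hbd
  simp only [tangentHyp, Set.mem_setOf_eq] at hp
  rw [PiLp.inner_apply, Fin.sum_univ_two] at hp
  simp only [RCLike.inner_apply, starRingEnd_apply, star_trivial, PiLp.sub_apply,
    midpoint_eq_smul_add, PiLp.smul_apply, PiLp.add_apply, smul_eq_mul, pt_apply0, pt_apply1] at hp
  push_cast at hp
  norm_num at hp
  rcases hp with h | h <;> linarith

lemma tangent_horiz (a c b : ℕ) (p : EuclideanSpace ℝ (Fin 2))
    (hp : p ∈ tangentHyp (pt (2*(a:ℝ)) (2*(b:ℝ))) (pt (2*(c:ℝ)) (2*(b:ℝ)))) (hac : a = c + 1) :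
    p 0 = 2*(c:ℝ) + 1 := by
  subst hac
  simp only [tangentHyp, Set.mem_setOf_eq] at hp
  rw [PiLp.inner_apply, Fin.sum_univ_two] at hp
  simp only [RCLike.inner_apply, starRingEnd_apply, star_trivial, PiLp.sub_apply,
    midpoint_eq_smul_add, PiLp.smul_apply, PiLp.add_apply, smul_eq_mul, pt_apply0, pt_apply1] at hp
  push_cast at hp
  norm_num at hp
  rcases hp with h | h <;> linarith

lemma tangentHyp_comm (x y : EuclideanSpace ℝ (Fin 2)) : tangentHyp x y = tangentHyp y x := by
  ext p
  simp only [tangentHyp, Set.mem_setOf_eq]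
  rw [midpoint_comm, ← neg_sub x y, inner_neg_right, neg_eq_zero]

lemma totsep (S : Finset (EuclideanSpace ℝ (Fin 2)))
    (hS : ∀ x ∈ S, ∃ a b : ℕ, x = pt (2*(a:ℝ)) (2*(b:ℝ))) :
    TotallySeparable (S : Set (EuclideanSpace ℝ (Fin 2))) := by
  intro x hx y hy hxy z hz
  obtain ⟨a, b, rfl⟩ := hS x hx
  obtain ⟨c, d, rfl⟩ := hS y hy
  obtain ⟨u, v, rfl⟩ := hS z hz
  rw [dist_pt_nat, int_sq_add_sq_eq_one] at hxy
  rw [Set.eq_empty_iff_forall_notMem]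
  rintro p ⟨hp1, hp2⟩
  rw [Metric.mem_ball] at hp2
  rcases hxy with ⟨hu, hv | hv⟩ | ⟨hv, hu | hu⟩
  · obtain rfl : c = a := by omega
    obtain rfl : b = d + 1 := by omega
    have hp1' := tangent_vert c (d+1) d p hp1 rfl
    have hcd := coord_le_dist p (pt (2*(u:ℝ)) (2*(v:ℝ))) 1
    rw [pt_apply1, hp1'] at hcd
    have := odd_far d v
    linarith
  · obtain rfl : c = a := by omega
    obtain rfl : d = b + 1 := by omega
    rw [tangentHyp_comm] at hp1
    have hp1' := tangent_vert c (b+1) b p hp1 rfl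
    have hcd := coord_le_dist p (pt (2*(u:ℝ)) (2*(v:ℝ))) 1
    rw [pt_apply1, hp1'] at hcd
    have := odd_far b v
    linarith
  · obtain rfl : d = b := by omega
    obtain rfl : a = c + 1 := by omega
    have hp1' := tangent_horiz (c+1) c d p hp1 rfl
    have hcd := coord_le_dist p (pt (2*(u:ℝ)) (2*(v:ℝ))) 0
    rw [pt_apply0, hp1'] at hcd
    have := odd_far c u
    linarith
  · obtain rfl : d = b := by omega
    obtain rfl : c = a + 1 := by omega
    rw [tangentHyp_comm] at hp1
    have hp1' := tangent_horiz (a+1) a d p hp1 rfl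
    have hcd := coord_le_dist p (pt (2*(u:ℝ)) (2*(v:ℝ))) 0
    rw [pt_apply0, hp1'] at hcd
    have := odd_far a u
    linarith

theorem stmt2 (n : ℕ) :
    ∃ S : Finset (EuclideanSpace ℝ (Fin 2)), S.card = n ∧ IsPacking ((S : Finset (EuclideanSpace ℝ (Fin 2))) : Set (EuclideanSpace ℝ (Fin 2))) ∧
      TotallySeparable ((S : Finset (EuclideanSpace ℝ (Fin 2))) : Set (EuclideanSpace ℝ (Fin 2))) ∧ (tangencies S : ℤ) = ⌊2 * ((n : ℝ) - Real.sqrt n)⌋ := by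
  rcases Nat.eq_zero_or_pos n with rfl | hn
  · refine ⟨∅, by simp, by simp [IsPacking], ?_, ?_⟩
    · intro x hx; simp at hx
    · simp [tangencies]
  · set s := Nat.sqrt (n-1) with hsdef
    set w := s + 1 with hwdef
    have hw : 0 < w := Nat.succ_pos _
    set q := (n-1)/w with hqdef
    have hwn : w ≤ n := by
      have h1 : s^2 ≤ n-1 := Nat.sqrt_le' _
      rcases Nat.eq_zero_or_pos s with h | h
      · omega
      · have : s ≤ s^2 := by nlinarith
        omega
    refine ⟨(range n).image (gp w), ?_, ?_, ?_, ?_⟩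
    · rw [card_image_of_injective _ (gp_inj hw), card_range]
    · intro x hx y hy hne
      simp only [coe_image, coe_range, Set.mem_image, Set.mem_Iio] at hx hy
      obtain ⟨k, hk, rfl⟩ := hx
      obtain ⟨l, hl, rfl⟩ := hy
      apply dist_pt_ge
      rintro ⟨h1, h2⟩
      apply hne
      unfold gp
      rw [h1, h2]
    · apply totsep
      intro x hx
      simp only [mem_image, mem_range] at hx
      obtain ⟨k, -, rfl⟩ := hx
      exact ⟨k % w, k / w, rfl⟩
    · have hcard : ((((range n).image (gp w)).offDiag.filter fun p => dist p.1 p.2 = 2).card)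
          = (((range n ×ˢ range n).filter fun p => Q w p.1 p.2 ∨ Q w p.2 p.1)).card := by
        symm
        refine Finset.card_bij (fun p _ => (gp w p.1, gp w p.2)) ?hi ?inj ?surj
        case hi =>
          rintro ⟨k, l⟩ hp
          simp only [mem_filter, mem_product, mem_range] at hp
          obtain ⟨⟨hk, hl⟩, hQ⟩ := hp
          have hkl : k ≠ l := by
            rcases hQ with (⟨rfl, -⟩ | rfl) | (⟨rfl, -⟩ | rfl) <;> omega
          simp only [mem_filter, mem_offDiag]
          refine ⟨⟨mem_image_of_mem _ (mem_range.2 hk), mem_image_of_mem _ (mem_range.2 hl), ?_⟩, ?_⟩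
          · exact fun h => hkl (gp_inj hw h)
          · exact (dist_gp hw k l).2 hQ
        case inj =>
          rintro ⟨k₁, l₁⟩ h₁ ⟨k₂, l₂⟩ h₂ heq
          rw [Prod.ext_iff] at heq ⊢
          exact ⟨gp_inj hw heq.1, gp_inj hw heq.2⟩
        case surj =>
          rintro ⟨x, y⟩ hb
          simp only [mem_filter, mem_offDiag, mem_image, mem_range] at hb
          obtain ⟨⟨⟨k, hk, rfl⟩, ⟨l, hl, rfl⟩, hne⟩, hdist⟩ := hb
          refine ⟨(k, l), ?_, rfl⟩
          simp only [mem_filter, mem_product, mem_range]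
          exact ⟨⟨hk, hl⟩, (dist_gp hw k l).1 hdist⟩
      have hcount : tangencies ((range n).image (gp w)) = ((n-1) - q) + (n - w) := by
        unfold tangencies
        rw [hcard, count_pairs hw hwn]
        omega
      rw [hcount]
      obtain ⟨hk1, hk2⟩ := key_ineq n hn
      rw [floor_formula n w q hk1 hk2]
      have hq_le : q ≤ n - 1 := Nat.div_le_self _ _
      push_cast
      omega
end
end

section
/- In the contact graph of a totally separable packing of unit spheres in ℝ^d (d ≥ 2), there is no triangle: no three centers are pairwise at distance 2. -/
open EuclideanSpace Metric Finset
open scoped Classical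

noncomputable section

theorem stmt4 (d : ℕ) (hd : 2 ≤ d) (S : Set (EuclideanSpace ℝ (Fin d)))
    (hpack : IsPacking S) (hsep : TotallySeparable S) :
    ¬ ∃ x ∈ S, ∃ y ∈ S, ∃ z ∈ S, x ≠ y ∧ y ≠ z ∧ x ≠ z ∧
      dist x y = 2 ∧ dist y z = 2 ∧ dist x z = 2 := by
  rintro ⟨x, hx, y, hy, z, hz, hxy, hyz, hxz, dxy, dyz, dxz⟩
  have h := hsep x hx y hy dxy z hz
  have hzx : ‖z - x‖ = 2 := by rw [← dist_eq_norm, dist_comm]; exact dxz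
  have hzy : ‖z - y‖ = 2 := by rw [← dist_eq_norm, dist_comm]; exact dyz
  have key : (inner ℝ (z - midpoint ℝ x y) (x - y) : ℝ) = (‖z - y‖ ^ 2 - ‖z - x‖ ^ 2) / 2 := by
    rw [@norm_sub_sq_real, @norm_sub_sq_real]
    simp only [midpoint_eq_smul_add, inner_sub_left, inner_sub_right, real_inner_smul_left,
      inner_add_right, inner_add_left, real_inner_self_eq_norm_sq, invOf_eq_inv]
    rw [real_inner_comm y x]
    ring
  have hzmem : z ∈ tangentHyp x y := by
    simp only [tangentHyp, Set.mem_setOf_eq, key, hzx, hzy]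
    ring
  have : z ∈ tangentHyp x y ∩ ball z 1 := ⟨hzmem, mem_ball_self one_pos⟩
  rw [h] at this
  exact this
end
end

section
/- For n = k^d with k ∈ ℕ, k ≥ 1, the packing of unit spheres centered at {0, 2, 4, …, 2(k−1)}^d ⊆ ℝ^d is totally separable and has exactly d·k^(d−1)·(k−1) = d(n − n^((d−1)/d)) tangencies. -/
open EuclideanSpace Metric Finset
open scoped Classical

noncomputable section

namespace Stmt7Aux

/-- the embedding of the grid -/
def emb (d k : ℕ) (f : Fin d → Fin k) : EuclideanSpace ℝ (Fin d) :=
  (WithLp.equiv 2 (Fin d → ℝ)).symm fun i => 2 * ((f i : ℕ) : ℝ)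

variable {d k : ℕ}

lemma emb_apply (f : Fin d → Fin k) (i : Fin d) : emb d k f i = 2 * ((f i : ℕ) : ℝ) := rfl

lemma emb_inj : Function.Injective (emb d k) := by
  intro f g h
  funext i
  have hi : (2 : ℝ) * ((f i : ℕ) : ℝ) = 2 * ((g i : ℕ) : ℝ) := congrArg (fun v : EuclideanSpace ℝ (Fin d) => v i) h
  have : ((f i : ℕ) : ℝ) = ((g i : ℕ) : ℝ) := by linarith
  exact Fin.ext (by exact_mod_cast this)

lemma dist_emb (f g : Fin d → Fin k) :
    dist (emb d k f) (emb d k g) =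
      2 * Real.sqrt (∑ i, (((f i : ℕ) : ℝ) - ((g i : ℕ) : ℝ)) ^ 2) := by
  rw [EuclideanSpace.dist_eq]
  have h : ∀ i, dist (emb d k f i) (emb d k g i) ^ 2
      = 4 * ((((f i : ℕ) : ℝ)) - ((g i : ℕ) : ℝ)) ^ 2 := by
    intro i
    rw [emb_apply, emb_apply, Real.dist_eq, sq_abs]
    ring
  rw [Finset.sum_congr rfl fun i _ => h i, ← Finset.mul_sum]
  rw [Real.sqrt_mul (by norm_num)]
  rw [show (4 : ℝ) = 2 ^ 2 by norm_num, Real.sqrt_sq (by norm_num)]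

lemma sum_cast (f g : Fin d → Fin k) :
    ((∑ i, (((f i : ℕ) : ℤ) - ((g i : ℕ) : ℤ)) ^ 2 : ℤ) : ℝ)
      = ∑ i, (((f i : ℕ) : ℝ) - ((g i : ℕ) : ℝ)) ^ 2 := by
  push_cast
  rfl

lemma dist_eq_two_iff (f g : Fin d → Fin k) :
    dist (emb d k f) (emb d k g) = 2 ↔
      (∑ i, (((f i : ℕ) : ℤ) - ((g i : ℕ) : ℤ)) ^ 2 : ℤ) = 1 := by
  rw [dist_emb]
  constructor
  · intro h
    have h2 : Real.sqrt (∑ i, (((f i : ℕ) : ℝ) - ((g i : ℕ) : ℝ)) ^ 2) = 1 := by linarith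
    have := Real.sqrt_eq_one.mp h2
    have : ((∑ i, (((f i : ℕ) : ℤ) - ((g i : ℕ) : ℤ)) ^ 2 : ℤ) : ℝ) = 1 := by
      rw [sum_cast]; exact this
    exact_mod_cast this
  · intro h
    have : (∑ i, (((f i : ℕ) : ℝ) - ((g i : ℕ) : ℝ)) ^ 2) = 1 := by
      rw [← sum_cast, h]; norm_num
    rw [this, Real.sqrt_one]; ring

lemma sumsq_eq_one_iff (f g : Fin d → Fin k) :
    (∑ i, (((f i : ℕ) : ℤ) - ((g i : ℕ) : ℤ)) ^ 2 : ℤ) = 1 ↔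
      ∃ j, (((f j : ℕ) : ℤ) - ((g j : ℕ) : ℤ)) ^ 2 = 1 ∧ ∀ i, i ≠ j → f i = g i := by
  constructor
  · intro h
    have hex : ∃ j, (((f j : ℕ) : ℤ) - ((g j : ℕ) : ℤ)) ^ 2 ≠ 0 := by
      by_contra hc
      push_neg at hc
      rw [Finset.sum_congr rfl fun i _ => hc i] at h
      simp at h
    obtain ⟨j, hj⟩ := hex
    have hsplit := Finset.add_sum_erase Finset.univ
      (fun i => (((f i : ℕ) : ℤ) - ((g i : ℕ) : ℤ)) ^ 2) (Finset.mem_univ j)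
    have hrest_nonneg : 0 ≤ ∑ i ∈ Finset.univ.erase j,
        (((f i : ℕ) : ℤ) - ((g i : ℕ) : ℤ)) ^ 2 :=
      Finset.sum_nonneg fun i _ => sq_nonneg _
    have hj1 : 1 ≤ (((f j : ℕ) : ℤ) - ((g j : ℕ) : ℤ)) ^ 2 := by
      have := sq_nonneg (((f j : ℕ) : ℤ) - ((g j : ℕ) : ℤ))
      omega
    have hsum1 : (((f j : ℕ) : ℤ) - ((g j : ℕ) : ℤ)) ^ 2 + ∑ i ∈ Finset.univ.erase j,
        (((f i : ℕ) : ℤ) - ((g i : ℕ) : ℤ)) ^ 2 = 1 := by rw [hsplit]; exact h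
    have hterm : (((f j : ℕ) : ℤ) - ((g j : ℕ) : ℤ)) ^ 2 = 1 := by linarith
    have hrest : ∑ i ∈ Finset.univ.erase j,
        (((f i : ℕ) : ℤ) - ((g i : ℕ) : ℤ)) ^ 2 = 0 := by linarith
    refine ⟨j, hterm, fun i hi => ?_⟩
    have hz := (Finset.sum_eq_zero_iff_of_nonneg fun i _ => sq_nonneg _).mp hrest i
      (Finset.mem_erase.mpr ⟨hi, Finset.mem_univ i⟩)
    have : ((f i : ℕ) : ℤ) = ((g i : ℕ) : ℤ) := by
      have := pow_eq_zero_iff (n := 2) (by norm_num) |>.mp hz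
      omega
    exact Fin.ext (by exact_mod_cast this)
  · rintro ⟨j, hj, hrest⟩
    rw [Finset.sum_eq_single_of_mem j (Finset.mem_univ j)
      (fun i _ hi => by rw [hrest i hi]; ring)]
    exact hj

lemma mem_S_iff {S : Finset (EuclideanSpace ℝ (Fin d))}
    (hS : S = (Finset.univ : Finset (Fin d → Fin k)).image fun f =>
      (WithLp.equiv 2 (Fin d → ℝ)).symm fun i => 2 * ((f i : ℕ) : ℝ))
    (x : EuclideanSpace ℝ (Fin d)) : x ∈ S ↔ ∃ f, emb d k f = x := by
  subst hS
  simp only [Finset.mem_image, Finset.mem_univ, true_and]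
  rfl

/-- coordinates of difference -/
lemma midpoint_apply (x y : EuclideanSpace ℝ (Fin d)) (i : Fin d) :
    midpoint ℝ x y i = (x i + y i) / 2 := by
  have h : midpoint ℝ x y + midpoint ℝ x y = x + y := midpoint_add_self ℝ x y
  have := congrArg (fun v : EuclideanSpace ℝ (Fin d) => v i) h
  have h2 : midpoint ℝ x y i + midpoint ℝ x y i = x i + y i := this
  linarith

lemma single_coord_le_dist (p z : EuclideanSpace ℝ (Fin d)) (j : Fin d) :
    |p j - z j| ≤ dist p z := by
  rw [EuclideanSpace.dist_eq]
  have h1 : dist (p j) (z j) ^ 2 ≤ ∑ i, dist (p i) (z i) ^ 2 :=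
    Finset.single_le_sum (f := fun i => dist (p i) (z i) ^ 2)
      (fun i _ => sq_nonneg _) (Finset.mem_univ j)
  calc |p j - z j| = Real.sqrt (dist (p j) (z j) ^ 2) := by
        rw [Real.sqrt_sq_eq_abs, Real.dist_eq, abs_abs]
      _ ≤ _ := Real.sqrt_le_sqrt h1

lemma card_adj_pairs (k : ℕ) :
    (Finset.univ.filter fun q : Fin k × Fin k =>
      (((q.1 : ℕ) : ℤ) - ((q.2 : ℕ) : ℤ)) ^ 2 = 1).card = 2 * (k - 1) := by
  have hiff : ∀ q : Fin k × Fin k,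
      ((((q.1 : ℕ) : ℤ) - ((q.2 : ℕ) : ℤ)) ^ 2 = 1 ↔
        ((q.1 : ℕ) = (q.2 : ℕ) + 1 ∨ (q.2 : ℕ) = (q.1 : ℕ) + 1)) := by
    intro q
    constructor
    · intro h
      rcases sq_eq_one_iff.mp h with h1 | h1 <;> [left; right] <;> omega
    · intro h
      rcases h with h | h
      · have h2 : (((q.1 : ℕ) : ℤ) - ((q.2 : ℕ) : ℤ)) = 1 := by omega
        rw [h2]; norm_num
      · have h2 : (((q.1 : ℕ) : ℤ) - ((q.2 : ℕ) : ℤ)) = -1 := by omega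
        rw [h2]; norm_num
  have hfl : (Finset.univ.filter fun q : Fin k × Fin k =>
      (((q.1 : ℕ) : ℤ) - ((q.2 : ℕ) : ℤ)) ^ 2 = 1)
      = Finset.univ.filter fun q : Fin k × Fin k =>
        ((q.1 : ℕ) = (q.2 : ℕ) + 1 ∨ (q.2 : ℕ) = (q.1 : ℕ) + 1) :=
    Finset.filter_congr fun q _ => by rw [hiff q]
  rw [hfl]
  rw [Finset.filter_or, Finset.card_union_of_disjoint (by
    rw [Finset.disjoint_left]
    intro q hq1 hq2
    simp only [Finset.mem_filter] at hq1 hq2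
    omega)]
  have hone : (Finset.univ.filter fun q : Fin k × Fin k => (q.1 : ℕ) = (q.2 : ℕ) + 1).card
      = k - 1 := by
    have hb : (Finset.univ.filter fun q : Fin k × Fin k => (q.1 : ℕ) = (q.2 : ℕ) + 1).card
        = (Finset.univ : Finset (Fin (k - 1))).card := by
      refine Finset.card_bij' (i := fun (q : Fin k × Fin k) hq =>
          (⟨(q.2 : ℕ), by simp only [Finset.mem_filter] at hq; omega⟩ : Fin (k - 1)))
        (j := fun (b : Fin (k - 1)) _ =>
          ((⟨(b : ℕ) + 1, by omega⟩ : Fin k), (⟨(b : ℕ), by omega⟩ : Fin k)))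
        (fun a ha => Finset.mem_univ _) (fun b hb => ?_) (fun a ha => ?_) (fun b hb => ?_)
      · simp [Finset.mem_filter]
      · simp only [Finset.mem_filter] at ha
        refine Prod.ext ?_ ?_ <;> apply Fin.ext <;> simp <;> omega
      · apply Fin.ext
        simp
    rw [hb, Finset.card_fin]
  have htwo : (Finset.univ.filter fun q : Fin k × Fin k => (q.2 : ℕ) = (q.1 : ℕ) + 1).card
      = (Finset.univ.filter fun q : Fin k × Fin k => (q.1 : ℕ) = (q.2 : ℕ) + 1).card := by
    apply Finset.card_nbij (i := Prod.swap)
    · intro a ha; simp only [Finset.coe_filter, Finset.mem_coe, Finset.mem_filter, Set.mem_setOf_eq] at ha ⊢; exact ⟨Finset.mem_univ _, ha.2⟩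
    · intro a _ b _ h; exact Prod.swap_injective h
    · intro b hb
      simp only [Finset.coe_filter, Set.mem_setOf_eq] at hb ⊢
      exact ⟨Prod.swap b, ⟨Finset.mem_univ _, hb.2⟩, Prod.swap_swap b⟩
  rw [hone, htwo, hone]
  omega

lemma card_ne_subtype (j : Fin d) : Fintype.card {i : Fin d // i ≠ j} = d - 1 := by
  rw [Fintype.card_subtype_compl (p := fun i => i = j), Fintype.card_subtype_eq, Fintype.card_fin]

/-- pairs agreeing off `j` and adjacent at `j`, as a product -/
def eTj (j : Fin d) :
    {p : (Fin d → Fin k) × (Fin d → Fin k) //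
        (((p.1 j : ℕ) : ℤ) - ((p.2 j : ℕ) : ℤ)) ^ 2 = 1 ∧ ∀ i, i ≠ j → p.1 i = p.2 i} ≃
      {q : Fin k × Fin k // (((q.1 : ℕ) : ℤ) - ((q.2 : ℕ) : ℤ)) ^ 2 = 1} ×
        ({i : Fin d // i ≠ j} → Fin k) where
  toFun p := (⟨(p.1.1 j, p.1.2 j), p.2.1⟩, fun i => p.1.1 i.1)
  invFun q := ⟨((fun i => if h : i = j then q.1.1.1 else q.2 ⟨i, h⟩),
               (fun i => if h : i = j then q.1.1.2 else q.2 ⟨i, h⟩)),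
      ⟨by simpa using q.1.2, fun i hi => by simp [hi]⟩⟩
  left_inv p := by
    obtain ⟨⟨f, g⟩, hfg⟩ := p
    apply Subtype.ext
    refine Prod.ext ?_ ?_ <;> funext i <;> dsimp
    · split
      · subst ‹i = j›; rfl
      · rfl
    · split
      · subst ‹i = j›; rfl
      · exact hfg.2 i ‹i ≠ j›
  right_inv q := by
    obtain ⟨⟨⟨a, b⟩, hab⟩, g⟩ := q
    refine Prod.ext (Subtype.ext ?_) ?_ <;> dsimp
    · simp
    · funext i
      simp [i.2]

lemma card_Tj (j : Fin d) :
    (Finset.univ.filter fun p : (Fin d → Fin k) × (Fin d → Fin k) =>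
      (((p.1 j : ℕ) : ℤ) - ((p.2 j : ℕ) : ℤ)) ^ 2 = 1 ∧ ∀ i, i ≠ j → p.1 i = p.2 i).card
      = 2 * (k - 1) * k ^ (d - 1) := by
  rw [← Fintype.card_subtype, Fintype.card_congr (eTj j), Fintype.card_prod,
    Fintype.card_fun, Fintype.card_fin, card_ne_subtype, Fintype.card_subtype,
    card_adj_pairs]

lemma card_T (d k : ℕ) :
    (Finset.univ.filter fun p : (Fin d → Fin k) × (Fin d → Fin k) =>
      (∑ i, (((p.1 i : ℕ) : ℤ) - ((p.2 i : ℕ) : ℤ)) ^ 2 : ℤ) = 1).card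
      = d * (2 * (k - 1) * k ^ (d - 1)) := by
  have hsplit : (Finset.univ.filter fun p : (Fin d → Fin k) × (Fin d → Fin k) =>
      (∑ i, (((p.1 i : ℕ) : ℤ) - ((p.2 i : ℕ) : ℤ)) ^ 2 : ℤ) = 1)
      = Finset.univ.biUnion fun j : Fin d =>
        Finset.univ.filter fun p : (Fin d → Fin k) × (Fin d → Fin k) =>
          (((p.1 j : ℕ) : ℤ) - ((p.2 j : ℕ) : ℤ)) ^ 2 = 1 ∧ ∀ i, i ≠ j → p.1 i = p.2 i := by
    ext p
    simp only [Finset.mem_filter, Finset.mem_biUnion, Finset.mem_univ, true_and]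
    exact sumsq_eq_one_iff p.1 p.2
  rw [hsplit, Finset.card_biUnion ?hdisj]
  · rw [Finset.sum_congr rfl fun j _ => card_Tj j]
    simp [Finset.card_univ, mul_comm]
  case hdisj =>
    intro j _ j' _ hjj'
    rw [Function.onFun, Finset.disjoint_left]
    intro p hp hp'
    simp only [Finset.mem_filter] at hp hp'
    have := hp'.2.2 j (by exact fun h => hjj' h)
    rw [this] at hp
    simp at hp

end Stmt7Aux

open Stmt7Aux

theorem stmt7 (d k : ℕ) (hd : 1 ≤ d) (hk : 1 ≤ k)
    (S : Finset (EuclideanSpace ℝ (Fin d)))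
    (hS : S = (Finset.univ : Finset (Fin d → Fin k)).image fun f =>
      (WithLp.equiv 2 (Fin d → ℝ)).symm fun i => 2 * ((f i : ℕ) : ℝ)) :
    S.card = k ^ d ∧ IsPacking ((S : Finset (EuclideanSpace ℝ (Fin d))) : Set (EuclideanSpace ℝ (Fin d))) ∧ TotallySeparable ((S : Finset (EuclideanSpace ℝ (Fin d))) : Set (EuclideanSpace ℝ (Fin d))) ∧
      tangencies S = d * k ^ (d - 1) * (k - 1) ∧
      (d * k ^ (d - 1) * (k - 1) : ℝ) =
        d * (((k ^ d : ℕ) : ℝ) - ((k ^ d : ℕ) : ℝ) ^ (((d : ℝ) - 1) / (d : ℝ))) := by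
  have hembS : S = Finset.univ.image (emb d k) := hS
  refine ⟨?_, ?_, ?_, ?_, ?_⟩
  · rw [hembS, Finset.card_image_of_injective _ emb_inj, Finset.card_univ,
      Fintype.card_fun, Fintype.card_fin, Fintype.card_fin]
  · intro x hx y hy hxy
    rw [Finset.mem_coe] at hx hy
    obtain ⟨f, rfl⟩ := (mem_S_iff hS x).mp hx
    obtain ⟨g, rfl⟩ := (mem_S_iff hS y).mp hy
    have hfg : f ≠ g := fun h => hxy (by rw [h])
    rw [dist_emb]
    have h1 : (1 : ℤ) ≤ ∑ i, (((f i : ℕ) : ℤ) - ((g i : ℕ) : ℤ)) ^ 2 := by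
      rcases lt_or_ge (∑ i, (((f i : ℕ) : ℤ) - ((g i : ℕ) : ℤ)) ^ 2) 1 with hlt | hle
      · exfalso
        have hnn : (0 : ℤ) ≤ ∑ i, (((f i : ℕ) : ℤ) - ((g i : ℕ) : ℤ)) ^ 2 :=
          Finset.sum_nonneg fun i _ => sq_nonneg _
        have h0 : ∑ i, (((f i : ℕ) : ℤ) - ((g i : ℕ) : ℤ)) ^ 2 = 0 := by omega
        have hall := (Finset.sum_eq_zero_iff_of_nonneg fun i _ => sq_nonneg _).mp h0
        apply hfg
        funext i
        have hz := hall i (Finset.mem_univ i)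
        have := pow_eq_zero_iff (n := 2) (by norm_num) |>.mp hz
        exact Fin.ext (by omega)
      · exact hle
    have h2 : (1 : ℝ) ≤ ∑ i, (((f i : ℕ) : ℝ) - ((g i : ℕ) : ℝ)) ^ 2 := by
      rw [← sum_cast]; exact_mod_cast h1
    have h3 := Real.sqrt_le_sqrt h2
    rw [Real.sqrt_one] at h3
    linarith
  · intro x hx y hy hxy z hz
    rw [Finset.mem_coe] at hx hy hz
    obtain ⟨f, rfl⟩ := (mem_S_iff hS x).mp hx
    obtain ⟨g, rfl⟩ := (mem_S_iff hS y).mp hy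
    obtain ⟨h, rfl⟩ := (mem_S_iff hS z).mp hz
    rw [dist_eq_two_iff] at hxy
    obtain ⟨j, hj, hoff⟩ := (sumsq_eq_one_iff f g).mp hxy
    rw [Set.eq_empty_iff_forall_notMem]
    rintro p ⟨hp1, hp2⟩
    rw [mem_ball] at hp2
    -- compute the inner product
    have hsub : ∀ i, (emb d k f - emb d k g) i = emb d k f i - emb d k g i := fun i => rfl
    have hpm : ∀ i, (p - midpoint ℝ (emb d k f) (emb d k g)) i
        = p i - midpoint ℝ (emb d k f) (emb d k g) i := fun i => rfl
    have hinner : (inner ℝ (p - midpoint ℝ (emb d k f) (emb d k g))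
          (emb d k f - emb d k g) : ℝ)
        = (p j - midpoint ℝ (emb d k f) (emb d k g) j) * (emb d k f j - emb d k g j) := by
      rw [PiLp.inner_apply]
      rw [Finset.sum_eq_single_of_mem j (Finset.mem_univ j)]
      · rw [RCLike.inner_apply, hsub, hpm]
        simp [mul_comm]
      · intro i _ hi
        rw [RCLike.inner_apply, hsub, emb_apply, emb_apply, hoff i hi]
        simp
    rw [tangentHyp, Set.mem_setOf_eq, hinner] at hp1
    have hne : emb d k f j - emb d k g j ≠ 0 := by
      rw [emb_apply, emb_apply]
      intro hcon
      have : ((f j : ℕ) : ℝ) = ((g j : ℕ) : ℝ) := by linarith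
      have hfj : (f j : ℕ) = (g j : ℕ) := by exact_mod_cast this
      rw [hfj] at hj
      simp at hj
    have hpj : p j = midpoint ℝ (emb d k f) (emb d k g) j :=
      by have := mul_eq_zero.mp hp1; rcases this with h1 | h1
         · linarith [sub_eq_zero.mp h1]
         · exact absurd h1 hne
    have hmj : midpoint ℝ (emb d k f) (emb d k g) j = ((f j : ℕ) : ℝ) + ((g j : ℕ) : ℝ) := by
      rw [midpoint_apply, emb_apply, emb_apply]; ring
    -- the j-th coordinate of p is at distance ≥ 1 from z's j-th coordinate
    set c : ℤ := ((f j : ℕ) : ℤ) + ((g j : ℕ) : ℤ) - 2 * ((h j : ℕ) : ℤ) with hc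
    have hfg1 : ((f j : ℕ) : ℤ) - ((g j : ℕ) : ℤ) = 1 ∨ ((f j : ℕ) : ℤ) - ((g j : ℕ) : ℤ) = -1 :=
      sq_eq_one_iff.mp hj
    have hcform : c = 2 * (((g j : ℕ) : ℤ) - ((h j : ℕ) : ℤ)) + 1 ∨
        c = 2 * (((g j : ℕ) : ℤ) - ((h j : ℕ) : ℤ)) - 1 := by
      rw [hc]; rcases hfg1 with h1 | h1 <;> [left; right] <;> omega
    have hcne : c ≠ 0 := by rcases hcform with h1 | h1 <;> omega
    have hcabs : (1 : ℤ) ≤ |c| := by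
      rcases hcne.lt_or_gt with h1 | h1
      · rw [abs_of_neg h1]; omega
      · rw [abs_of_pos h1]; omega
    have hcoord : |p j - emb d k h j| = ((|c| : ℤ) : ℝ) := by
      rw [hpj, hmj, emb_apply]
      rw [show ((f j : ℕ) : ℝ) + ((g j : ℕ) : ℝ) - 2 * ((h j : ℕ) : ℝ) = ((c : ℤ) : ℝ) by
        push_cast [hc]; ring]
      rw [← Int.cast_abs]
    have hge : (1 : ℝ) ≤ |p j - emb d k h j| := by
      rw [hcoord]; exact_mod_cast hcabs
    have := single_coord_le_dist p (emb d k h) j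
    linarith
  · have hcard : (S.offDiag.filter fun p => dist p.1 p.2 = 2).card
        = (Finset.univ.filter fun p : (Fin d → Fin k) × (Fin d → Fin k) =>
          (∑ i, (((p.1 i : ℕ) : ℤ) - ((p.2 i : ℕ) : ℤ)) ^ 2 : ℤ) = 1).card := by
      symm
      refine Finset.card_bij (fun p _ => (emb d k p.1, emb d k p.2)) (fun p hp => ?_)
        (fun p hp p' hp' hpp => ?_) (fun q hq => ?_)
      · rw [Finset.mem_filter] at hp
        have hsum := hp.2
        have hne : p.1 ≠ p.2 := by
          intro hcon
          rw [hcon] at hsum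
          simp at hsum
        rw [Finset.mem_filter, Finset.mem_offDiag]
        refine ⟨⟨?_, ?_, fun hcon => hne (emb_inj hcon)⟩, ?_⟩
        · exact (mem_S_iff hS _).mpr ⟨p.1, rfl⟩
        · exact (mem_S_iff hS _).mpr ⟨p.2, rfl⟩
        · exact (dist_eq_two_iff p.1 p.2).mpr hsum
      · have h1 : emb d k p.1 = emb d k p'.1 := congrArg Prod.fst hpp
        have h2 : emb d k p.2 = emb d k p'.2 := congrArg Prod.snd hpp
        exact Prod.ext (emb_inj h1) (emb_inj h2)
      · rw [Finset.mem_filter, Finset.mem_offDiag] at hq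
        obtain ⟨⟨hq1, hq2, hq3⟩, hq4⟩ := hq
        obtain ⟨f, hf⟩ := (mem_S_iff hS _).mp hq1
        obtain ⟨g, hg⟩ := (mem_S_iff hS _).mp hq2
        refine ⟨(f, g), Finset.mem_filter.mpr ⟨Finset.mem_univ _, ?_⟩, ?_⟩
        · apply (dist_eq_two_iff f g).mp
          rw [hf, hg]
          exact hq4
        · exact Prod.ext hf hg
    rw [tangencies, hcard, card_T]
    have : d * (2 * (k - 1) * k ^ (d - 1)) = 2 * (d * k ^ (d - 1) * (k - 1)) := by ring
    rw [this]
    set m := d * k ^ (d - 1) * (k - 1)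
    omega
  · have hd0 : (d : ℝ) ≠ 0 := Nat.cast_ne_zero.mpr (by omega)
    have hk0 : (0 : ℝ) ≤ (k : ℝ) := Nat.cast_nonneg k
    have hrw : ((k ^ d : ℕ) : ℝ) = (k : ℝ) ^ d := by push_cast; ring
    have hexp : (d : ℝ) * (((d : ℝ) - 1) / (d : ℝ)) = ((d - 1 : ℕ) : ℝ) := by
      rw [Nat.cast_sub hd]
      field_simp
      simp
    have hpow : ((k : ℝ) ^ d) ^ (((d : ℝ) - 1) / (d : ℝ)) = (k : ℝ) ^ (d - 1 : ℕ) := by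
      rw [← Real.rpow_natCast (k : ℝ) d, ← Real.rpow_mul hk0, hexp, Real.rpow_natCast]
    rw [hrw, hpow]
    have hkd : (k : ℝ) ^ d = (k : ℝ) ^ (d - 1 : ℕ) * k := by
      rw [← pow_succ]
      congr 1
      omega
    rw [hkd]
    ring
end
end

section
/- For k ∈ ℕ, k ≥ 1, and n = k², the maximum number of pairs at distance exactly 2 among any n points in 2ℤ² equals 2k(k−1). -/
open EuclideanSpace Metric Finset
open scoped Classical

noncomputable section

def emb (p : ℤ × ℤ) : EuclideanSpace ℝ (Fin 2) :=
  (WithLp.equiv 2 (Fin 2 → ℝ)).symm ![(2*p.1 : ℝ), (2*p.2 : ℝ)]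

@[simp] lemma emb_zero (p : ℤ × ℤ) : emb p 0 = 2*p.1 := rfl
@[simp] lemma emb_one (p : ℤ × ℤ) : emb p 1 = 2*p.2 := rfl

lemma emb_inj : Function.Injective emb := by
  intro p q h
  have h0 : emb p 0 = emb q 0 := by rw [h]
  have h1 : emb p 1 = emb q 1 := by rw [h]
  simp only [emb_zero, emb_one] at h0 h1
  have : p.1 = q.1 := by exact_mod_cast mul_left_cancel₀ (two_ne_zero) h0
  have : p.2 = q.2 := by exact_mod_cast mul_left_cancel₀ (two_ne_zero) h1
  exact Prod.ext ‹p.1 = q.1› ‹p.2 = q.2›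

def adj (p q : ℤ × ℤ) : Prop :=
  q = (p.1+1, p.2) ∨ p = (q.1+1, q.2) ∨ q = (p.1, p.2+1) ∨ p = (q.1, q.2+1)

lemma sq_lemma (a b : ℤ) (h : a^2 + b^2 = 1) :
    (b = 0 ∧ (a = 1 ∨ a = -1)) ∨ (a = 0 ∧ (b = 1 ∨ b = -1)) := by
  have h1 : -1 ≤ a := by nlinarith [sq_nonneg a, sq_nonneg b]
  have h2 : a ≤ 1 := by nlinarith [sq_nonneg a, sq_nonneg b]
  have h3 : -1 ≤ b := by nlinarith [sq_nonneg a, sq_nonneg b]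
  have h4 : b ≤ 1 := by nlinarith [sq_nonneg a, sq_nonneg b]
  interval_cases a <;> interval_cases b <;> simp_all

lemma dist_emb (p q : ℤ × ℤ) : dist (emb p) (emb q) = 2 ↔ adj p q := by
  rw [EuclideanSpace.dist_eq]
  rw [show (2:ℝ) = Real.sqrt 4 by rw [show (4:ℝ) = 2^2 by norm_num, Real.sqrt_sq (by norm_num)]]
  rw [Real.sqrt_inj (by positivity) (by norm_num)]
  rw [Fin.sum_univ_two]
  simp only [emb_zero, emb_one, Real.dist_eq, sq_abs]
  constructor
  · intro h
    have h' : ((p.1 - q.1)^2 + (p.2 - q.2)^2 : ℤ) = 1 := by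
      have : ((p.1:ℝ) - q.1)^2 + ((p.2:ℝ) - q.2)^2 = 1 := by nlinarith
      exact_mod_cast this
    rcases sq_lemma _ _ h' with ⟨hb, ha|ha⟩ | ⟨ha, hb|hb⟩
    · exact Or.inr (Or.inl (Prod.ext (by omega) (by omega)))
    · exact Or.inl (Prod.ext (by omega) (by omega))
    · exact Or.inr (Or.inr (Or.inr (Prod.ext (by omega) (by omega))))
    · exact Or.inr (Or.inr (Or.inl (Prod.ext (by omega) (by omega))))
  · have hp : p = (p.1, p.2) := rfl
    have hq : q = (q.1, q.2) := rfl
    rintro (rfl | h | rfl | h) <;>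
      [skip; (rw [hp, Prod.mk.injEq] at h; obtain ⟨e1, e2⟩ := h; rw [e1, e2]); skip;
       (rw [hp, Prod.mk.injEq] at h; obtain ⟨e1, e2⟩ := h; rw [e1, e2])] <;>
      (push_cast; ring_nf)



def Hc (T : Finset (ℤ × ℤ)) : ℕ := (T.filter fun p => (p.1+1, p.2) ∈ T).card
def Vc (T : Finset (ℤ × ℤ)) : ℕ := (T.filter fun p => (p.1, p.2+1) ∈ T).card

lemma cardA1 (T : Finset (ℤ × ℤ)) :
    (T.offDiag.filter fun pq => pq.2 = (pq.1.1+1, pq.1.2)).card = Hc T := by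
  rw [Hc]
  apply Finset.card_bij (fun pq _ => pq.1)
  · rintro ⟨p, q⟩ h
    simp only [mem_filter, mem_offDiag] at h ⊢
    obtain ⟨⟨hp, hq, hne⟩, he⟩ := h
    exact ⟨hp, by rw [← he]; exact hq⟩
  · rintro ⟨p, q⟩ h ⟨p', q'⟩ h' he
    simp only [mem_filter, mem_offDiag] at h h'
    simp only at he
    subst he
    rw [Prod.mk.injEq]
    exact ⟨rfl, by rw [h.2, h'.2]⟩
  · intro p hp
    simp only [mem_filter] at hp
    refine ⟨(p, (p.1+1, p.2)), Finset.mem_filter.mpr ⟨Finset.mem_offDiag.mpr ⟨hp.1, hp.2, fun he => ?_⟩, rfl⟩, rfl⟩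
    have := congrArg Prod.fst he
    dsimp only at this
    omega

lemma cardA2 (T : Finset (ℤ × ℤ)) :
    (T.offDiag.filter fun pq => pq.1 = (pq.2.1+1, pq.2.2)).card = Hc T := by
  rw [← cardA1 T]
  apply Finset.card_bij (fun pq _ => (pq.2, pq.1))
  · rintro ⟨p, q⟩ h
    simp only [mem_filter, mem_offDiag] at h ⊢
    exact ⟨⟨h.1.2.1, h.1.1, fun e => h.1.2.2 e.symm⟩, h.2⟩
  · rintro ⟨p, q⟩ _ ⟨p', q'⟩ _ he
    simp only [Prod.mk.injEq] at he ⊢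
    exact ⟨he.2, he.1⟩
  · rintro ⟨p, q⟩ h
    refine ⟨(q, p), ?_, rfl⟩
    simp only [mem_filter, mem_offDiag] at h ⊢
    exact ⟨⟨h.1.2.1, h.1.1, fun e => h.1.2.2 e.symm⟩, h.2⟩

lemma cardB1 (T : Finset (ℤ × ℤ)) :
    (T.offDiag.filter fun pq => pq.2 = (pq.1.1, pq.1.2+1)).card = Vc T := by
  rw [Vc]
  apply Finset.card_bij (fun pq _ => pq.1)
  · rintro ⟨p, q⟩ h
    simp only [mem_filter, mem_offDiag] at h ⊢
    obtain ⟨⟨hp, hq, hne⟩, he⟩ := h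
    exact ⟨hp, by rw [← he]; exact hq⟩
  · rintro ⟨p, q⟩ h ⟨p', q'⟩ h' he
    simp only [mem_filter, mem_offDiag] at h h'
    simp only at he
    subst he
    rw [Prod.mk.injEq]
    exact ⟨rfl, by rw [h.2, h'.2]⟩
  · intro p hp
    simp only [mem_filter] at hp
    refine ⟨(p, (p.1, p.2+1)), Finset.mem_filter.mpr ⟨Finset.mem_offDiag.mpr ⟨hp.1, hp.2, fun he => ?_⟩, rfl⟩, rfl⟩
    have := congrArg Prod.snd he
    dsimp only at this
    omega

lemma cardB2 (T : Finset (ℤ × ℤ)) :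
    (T.offDiag.filter fun pq => pq.1 = (pq.2.1, pq.2.2+1)).card = Vc T := by
  rw [← cardB1 T]
  apply Finset.card_bij (fun pq _ => (pq.2, pq.1))
  · rintro ⟨p, q⟩ h
    simp only [mem_filter, mem_offDiag] at h ⊢
    exact ⟨⟨h.1.2.1, h.1.1, fun e => h.1.2.2 e.symm⟩, h.2⟩
  · rintro ⟨p, q⟩ _ ⟨p', q'⟩ _ he
    simp only [Prod.mk.injEq] at he ⊢
    exact ⟨he.2, he.1⟩
  · rintro ⟨p, q⟩ h
    refine ⟨(q, p), ?_, rfl⟩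
    simp only [mem_filter, mem_offDiag] at h ⊢
    exact ⟨⟨h.1.2.1, h.1.1, fun e => h.1.2.2 e.symm⟩, h.2⟩

lemma count_adj (T : Finset (ℤ × ℤ)) :
    (T.offDiag.filter fun pq => adj pq.1 pq.2).card = 2 * (Hc T + Vc T) := by
  classical
  have e1 : (T.offDiag.filter fun pq => adj pq.1 pq.2) =
      ((T.offDiag.filter fun pq => pq.2 = (pq.1.1+1, pq.1.2)) ∪
       (T.offDiag.filter fun pq => pq.1 = (pq.2.1+1, pq.2.2))) ∪
      ((T.offDiag.filter fun pq => pq.2 = (pq.1.1, pq.1.2+1)) ∪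
       (T.offDiag.filter fun pq => pq.1 = (pq.2.1, pq.2.2+1))) := by
    simp only [← filter_or]
    apply Finset.filter_congr
    intro pq _
    unfold adj
    tauto
  have d12 : Disjoint (T.offDiag.filter fun pq => pq.2 = (pq.1.1+1, pq.1.2))
      (T.offDiag.filter fun pq => pq.1 = (pq.2.1+1, pq.2.2)) := by
    rw [Finset.disjoint_left]
    rintro ⟨p, q⟩ m1 m2
    simp only [mem_filter] at m1 m2
    obtain h1 := m1.2; obtain h2 := m2.2
    have a1 := congrArg Prod.fst h1; have a2 := congrArg Prod.snd h1
    have b1 := congrArg Prod.fst h2; have b2 := congrArg Prod.snd h2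
    dsimp only at a1 a2 b1 b2
    omega
  have d34 : Disjoint (T.offDiag.filter fun pq => pq.2 = (pq.1.1, pq.1.2+1))
      (T.offDiag.filter fun pq => pq.1 = (pq.2.1, pq.2.2+1)) := by
    rw [Finset.disjoint_left]
    rintro ⟨p, q⟩ m1 m2
    simp only [mem_filter] at m1 m2
    obtain h1 := m1.2; obtain h2 := m2.2
    have a1 := congrArg Prod.fst h1; have a2 := congrArg Prod.snd h1
    have b1 := congrArg Prod.fst h2; have b2 := congrArg Prod.snd h2
    dsimp only at a1 a2 b1 b2
    omega
  have dbig : Disjoint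
      ((T.offDiag.filter fun pq => pq.2 = (pq.1.1+1, pq.1.2)) ∪
       (T.offDiag.filter fun pq => pq.1 = (pq.2.1+1, pq.2.2)))
      ((T.offDiag.filter fun pq => pq.2 = (pq.1.1, pq.1.2+1)) ∪
       (T.offDiag.filter fun pq => pq.1 = (pq.2.1, pq.2.2+1))) := by
    apply Finset.disjoint_union_left.mpr
    constructor <;> apply Finset.disjoint_union_right.mpr <;> constructor <;>
      { rw [Finset.disjoint_left]
        rintro ⟨p, q⟩ m1 m2
        simp only [mem_filter] at m1 m2
        obtain h1 := m1.2; obtain h2 := m2.2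
        have a1 := congrArg Prod.fst h1; have a2 := congrArg Prod.snd h1
        have b1 := congrArg Prod.fst h2; have b2 := congrArg Prod.snd h2
        dsimp only at a1 a2 b1 b2
        omega }
  rw [e1, Finset.card_union_of_disjoint dbig, Finset.card_union_of_disjoint d12,
    Finset.card_union_of_disjoint d34, cardA1, cardA2, cardB1, cardB2]
  ring



lemma row_bound (T : Finset (ℤ × ℤ)) : Hc T + (T.image Prod.snd).card ≤ T.card := by
  classical
  set rows := T.image Prod.snd with hrows
  set F := T.filter fun p => (p.1+1, p.2) ∈ T with hF
  have hFsub : F ⊆ T := filter_subset _ _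
  have hT : T.card = ∑ y ∈ rows, (T.filter fun p => p.2 = y).card :=
    card_eq_sum_card_fiberwise (fun p hp => mem_image_of_mem _ hp)
  have hFc : F.card = ∑ y ∈ rows, (F.filter fun p => p.2 = y).card :=
    card_eq_sum_card_fiberwise (fun p hp => mem_image_of_mem _ (hFsub hp))
  have key : ∀ y ∈ rows, (F.filter fun p => p.2 = y).card + 1 ≤ (T.filter fun p => p.2 = y).card := by
    intro y hy
    set Ty := T.filter fun p => p.2 = y with hTy
    have hne : (Ty.image Prod.fst).Nonempty := by
      rw [hrows, mem_image] at hy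
      obtain ⟨p, hp, hpy⟩ := hy
      exact ⟨p.1, mem_image_of_mem _ (mem_filter.mpr ⟨hp, hpy⟩)⟩
    set m := (Ty.image Prod.fst).min' hne with hm
    have hmem : (m, y) ∈ Ty := by
      have := (Ty.image Prod.fst).min'_mem hne
      rw [mem_image] at this
      obtain ⟨p, hp, hpm⟩ := this
      have : p = (m, y) := by
        have := (mem_filter.mp hp).2
        exact Prod.ext hpm this
      rwa [← this]
    have himg : ((F.filter fun p => p.2 = y).image fun p => (p.1+1, p.2)) ⊆ Ty := by
      intro q hq
      rw [mem_image] at hq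
      obtain ⟨p, hp, rfl⟩ := hq
      rw [mem_filter] at hp ⊢
      obtain ⟨hpF, hpy⟩ := hp
      exact ⟨(mem_filter.mp hpF).2, hpy⟩
    have hnotin : (m, y) ∉ ((F.filter fun p => p.2 = y).image fun p => (p.1+1, p.2)) := by
      intro hin
      rw [mem_image] at hin
      obtain ⟨p, hp, he⟩ := hin
      rw [mem_filter] at hp
      have hpTy : p ∈ Ty := mem_filter.mpr ⟨hFsub hp.1, hp.2⟩
      have hle : m ≤ p.1 := min'_le _ _ (mem_image_of_mem _ hpTy)
      have := congrArg Prod.fst he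
      dsimp only at this
      omega
    have hins : insert (m, y) ((F.filter fun p => p.2 = y).image fun p => (p.1+1, p.2)) ⊆ Ty :=
      insert_subset hmem himg
    have hinj : Set.InjOn (fun p : ℤ × ℤ => (p.1+1, p.2)) (F.filter fun p => p.2 = y) := by
      intro a _ b _ he
      have h1 := congrArg Prod.fst he
      have h2 := congrArg Prod.snd he
      dsimp only at h1 h2
      exact Prod.ext (by omega) h2
    calc (F.filter fun p => p.2 = y).card + 1
        = (insert (m, y) ((F.filter fun p => p.2 = y).image fun p => (p.1+1, p.2))).card := by
          rw [card_insert_of_notMem hnotin, card_image_of_injOn hinj]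
      _ ≤ Ty.card := card_le_card hins
  calc Hc T + rows.card = F.card + rows.card := rfl
    _ = ∑ y ∈ rows, ((F.filter fun p => p.2 = y).card + 1) := by
        rw [hFc, Finset.sum_add_distrib, Finset.sum_const, smul_eq_mul, mul_one]
    _ ≤ ∑ y ∈ rows, (T.filter fun p => p.2 = y).card := Finset.sum_le_sum key
    _ = T.card := hT.symm

lemma col_bound (T : Finset (ℤ × ℤ)) : Vc T + (T.image Prod.fst).card ≤ T.card := by
  classical
  have hswapinj : Function.Injective (Prod.swap : ℤ × ℤ → ℤ × ℤ) := Prod.swap_injective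
  have h := row_bound (T.image Prod.swap)
  have e1 : (T.image Prod.swap).card = T.card := card_image_of_injective _ hswapinj
  have e2 : ((T.image Prod.swap).image Prod.snd) = T.image Prod.fst := by
    rw [Finset.image_image]; rfl
  have e3 : Hc (T.image Prod.swap) = Vc T := by
    rw [Hc, Vc]
    rw [Finset.filter_image]
    rw [card_image_of_injective _ hswapinj]
    congr 1
    apply Finset.filter_congr
    intro p hp
    show ((Prod.swap p).1 + 1, (Prod.swap p).2) ∈ T.image Prod.swap ↔ (p.1, p.2+1) ∈ T
    have : ((Prod.swap p).1 + 1, (Prod.swap p).2) = Prod.swap (p.1, p.2+1) := rfl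
    rw [this]
    constructor
    · intro hm
      rw [Finset.mem_image] at hm
      obtain ⟨q, hq, he⟩ := hm
      rwa [← hswapinj he]
    · intro hm
      exact Finset.mem_image_of_mem _ hm
  rw [e1, e2, e3] at h
  exact h

lemma card_filter_dist (T : Finset (ℤ × ℤ)) :
    ((T.image emb).offDiag.filter fun p => dist p.1 p.2 = 2).card =
      (T.offDiag.filter fun pq => adj pq.1 pq.2).card := by
  symm
  apply Finset.card_bij (fun pq _ => (emb pq.1, emb pq.2))
  · rintro ⟨p, q⟩ h
    simp only [mem_filter, mem_offDiag] at h ⊢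
    obtain ⟨⟨hp, hq, hne⟩, ha⟩ := h
    exact ⟨⟨mem_image_of_mem _ hp, mem_image_of_mem _ hq, fun he => hne (emb_inj he)⟩,
      (dist_emb p q).mpr ha⟩
  · rintro ⟨p, q⟩ _ ⟨p', q'⟩ _ he
    simp only [Prod.mk.injEq] at he ⊢
    exact ⟨emb_inj he.1, emb_inj he.2⟩
  · rintro ⟨x, y⟩ h
    simp only [mem_filter, mem_offDiag, mem_image] at h
    obtain ⟨⟨⟨p, hp, rfl⟩, ⟨q, hq, rfl⟩, hne⟩, hd⟩ := h
    refine ⟨(p, q), ?_, rfl⟩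
    simp only [mem_filter, mem_offDiag]
    exact ⟨⟨hp, hq, fun he => hne (by rw [he])⟩, (dist_emb p q).mp hd⟩

lemma tangencies_emb (T : Finset (ℤ × ℤ)) : tangencies (T.image emb) = Hc T + Vc T := by
  rw [tangencies, card_filter_dist, count_adj]
  omega

/- Grid -/
def grid (k : ℕ) : Finset (ℤ × ℤ) := Finset.Ico (0:ℤ) k ×ˢ Finset.Ico (0:ℤ) k

lemma grid_card (k : ℕ) : (grid k).card = k ^ 2 := by
  rw [grid, Finset.card_product, Int.card_Ico]
  simp [sq]

lemma grid_Hc (k : ℕ) (hk : 1 ≤ k) : Hc (grid k) = (k - 1) * k := by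
  rw [Hc]
  have he : ((grid k).filter fun p => (p.1+1, p.2) ∈ grid k) =
      Finset.Ico (0:ℤ) (k - 1) ×ˢ Finset.Ico (0:ℤ) k := by
    ext ⟨a, b⟩
    simp only [grid, mem_filter, Finset.mem_product, Finset.mem_Ico]
    constructor
    · rintro ⟨⟨⟨h1, h2⟩, h3, h4⟩, ⟨h5, h6⟩, _⟩
      exact ⟨⟨h1, by omega⟩, h3, h4⟩
    · rintro ⟨⟨h1, h2⟩, h3, h4⟩
      exact ⟨⟨⟨h1, by omega⟩, h3, h4⟩, ⟨by omega, by omega⟩, h3, h4⟩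
  rw [he, Finset.card_product, Int.card_Ico, Int.card_Ico]
  have : ((k:ℤ) - 1 - 0).toNat = k - 1 := by omega
  have h2 : ((k:ℤ) - 0).toNat = k := by omega
  rw [this, h2]

lemma grid_Vc (k : ℕ) (hk : 1 ≤ k) : Vc (grid k) = k * (k - 1) := by
  rw [Vc]
  have he : ((grid k).filter fun p => (p.1, p.2+1) ∈ grid k) =
      Finset.Ico (0:ℤ) k ×ˢ Finset.Ico (0:ℤ) (k - 1) := by
    ext ⟨a, b⟩
    simp only [grid, mem_filter, Finset.mem_product, Finset.mem_Ico]
    constructor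
    · rintro ⟨⟨⟨h1, h2⟩, h3, h4⟩, ⟨h5, h6⟩, _⟩
      exact ⟨⟨h1, h2⟩, h3, by omega⟩
    · rintro ⟨⟨h1, h2⟩, h3, h4⟩
      exact ⟨⟨⟨h1, h2⟩, h3, by omega⟩, ⟨h1, h2⟩, by omega, by omega⟩
  rw [he, Finset.card_product, Int.card_Ico, Int.card_Ico]
  have h1 : ((k:ℤ) - 1 - 0).toNat = k - 1 := by omega
  have h2 : ((k:ℤ) - 0).toNat = k := by omega
  rw [h1, h2]

/- decoding -/
def dec (x : EuclideanSpace ℝ (Fin 2)) : ℤ × ℤ := (round (x 0 / 2), round (x 1 / 2))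

lemma emb_dec {x : EuclideanSpace ℝ (Fin 2)} (hx : ∀ i, ∃ a : ℤ, x i = 2 * a) :
    emb (dec x) = x := by
  obtain ⟨a0, h0⟩ := hx 0
  obtain ⟨a1, h1⟩ := hx 1
  have d0 : round (x 0 / 2) = a0 := by rw [h0]; rw [mul_div_cancel_left₀ _ (two_ne_zero)]; exact round_intCast a0
  have d1 : round (x 1 / 2) = a1 := by rw [h1]; rw [mul_div_cancel_left₀ _ (two_ne_zero)]; exact round_intCast a1
  ext i
  fin_cases i
  · show emb (dec x) 0 = x 0
    rw [emb_zero, dec]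
    dsimp only
    rw [d0, h0]
  · show emb (dec x) 1 = x 1
    rw [emb_one, dec]
    dsimp only
    rw [d1, h1]

theorem stmt15 (k : ℕ) (hk : 1 ≤ k) :
    IsGreatest {m | ∃ S : Finset (EuclideanSpace ℝ (Fin 2)),
        (∀ x ∈ S, ∀ i, ∃ a : ℤ, x i = 2 * a) ∧ S.card = k ^ 2 ∧ tangencies S = m}
      (2 * k * (k - 1)) := by
  constructor
  · -- membership: the k×k grid
    refine ⟨(grid k).image emb, ?_, ?_, ?_⟩
    · intro x hx i
      rw [Finset.mem_image] at hx
      obtain ⟨p, _, rfl⟩ := hx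
      fin_cases i
      · exact ⟨p.1, rfl⟩
      · exact ⟨p.2, rfl⟩
    · rw [card_image_of_injective _ emb_inj, grid_card]
    · rw [tangencies_emb, grid_Hc k hk, grid_Vc k hk]
      have : ∃ k', k = k' + 1 := ⟨k - 1, by omega⟩
      obtain ⟨k', rfl⟩ := this
      simp only [Nat.add_sub_cancel]
      ring
  · -- upper bound
    rintro m ⟨S, hint, hcard, rfl⟩
    set T := S.image dec with hT
    have hED : ∀ x ∈ S, emb (dec x) = x := fun x hx => emb_dec (hint x hx)
    have hST : T.image emb = S := by
      rw [hT, Finset.image_image]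
      conv_rhs => rw [← Finset.image_id (s := S)]
      exact Finset.image_congr fun x hx => hED x hx
    have hn : T.card = k ^ 2 := by
      rw [hT, Finset.card_image_of_injOn, hcard]
      intro x hx y hy e
      rw [← hED x hx, ← hED y hy, e]
    have htan : tangencies S = Hc T + Vc T := by
      rw [← hST, tangencies_emb]
    set R := (T.image Prod.snd).card with hR
    set C := (T.image Prod.fst).card with hC
    have hsub : T ⊆ (T.image Prod.fst) ×ˢ (T.image Prod.snd) := by
      intro p hp
      rw [Finset.mem_product]
      exact ⟨mem_image_of_mem _ hp, mem_image_of_mem _ hp⟩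
    have hRC : k ^ 2 ≤ C * R := by
      calc k ^ 2 = T.card := hn.symm
        _ ≤ ((T.image Prod.fst) ×ˢ (T.image Prod.snd)).card := card_le_card hsub
        _ = C * R := Finset.card_product _ _
    have hH : Hc T + R ≤ k ^ 2 := hn ▸ row_bound T
    have hV : Vc T + C ≤ k ^ 2 := hn ▸ col_bound T
    have hsum : 2 * k ≤ R + C := by
      have h1 : (2 * k) ^ 2 ≤ (R + C) ^ 2 := by nlinarith [two_mul_le_add_sq R C, hRC]
      exact (Nat.pow_le_pow_iff_left (by norm_num)).mp h1
    rw [htan]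
    obtain ⟨k', rfl⟩ : ∃ k', k = k' + 1 := ⟨k - 1, by omega⟩
    simp only [Nat.add_sub_cancel]
    nlinarith

end
end
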